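/- Let T(x) = 2x mod 1 on ℝ/ℤ. The set X_∞ = {x ∈ ℝ/ℤ : liminf_{n→∞} (1/n)∑_{i=1}^{n} log₂ d(T^i x, x) = −∞} is residual (contains a dense G_δ set) in ℝ/ℤ. -/

import Mathlib

/-- The doubling map on the circle `ℝ/ℤ`. -/
noncomputable def double : AddCircle (1:ℝ) → AddCircle (1:ℝ) := fun z => z + z

open Filter Real

lemma continuous_double : Continuous double := continuous_id.add continuous_id

lemma double_iter (r : ℝ) (i : ℕ) :
    double^[i] ((r : ℝ) : AddCircle (1:ℝ)) = (((2:ℝ)^i * r : ℝ) : AddCircle (1:ℝ)) := by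
  induction i with
  | zero => norm_num
  | succ i ih =>
      rw [Function.iterate_succ_apply', ih]
      show (((2:ℝ)^i * r : ℝ) : AddCircle (1:ℝ)) + (((2:ℝ)^i * r : ℝ) : AddCircle (1:ℝ)) = _
      rw [← AddCircle.coe_add]
      congr 1
      ring

lemma norm_coe_le (r : ℝ) : ‖((r : ℝ) : AddCircle (1:ℝ))‖ ≤ |r| :=
  by simpa [Real.norm_eq_abs] using (QuotientAddGroup.norm_mk_le_norm (S := AddSubgroup.zmultiples (1:ℝ)) (m := r))

lemma dist_coe (a b : ℝ) :
    dist ((a : ℝ) : AddCircle (1:ℝ)) ((b : ℝ) : AddCircle (1:ℝ)) =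
      ‖((a - b : ℝ) : AddCircle (1:ℝ))‖ := by
  rw [dist_eq_norm, ← AddCircle.coe_sub]

lemma int_coe_zero (a : ℤ) : (((a : ℝ)) : AddCircle (1:ℝ)) = 0 := by
  rw [AddCircle.coe_eq_zero_iff]
  exact ⟨a, by simp⟩

def goodSet (N : ℕ) : Set (AddCircle (1:ℝ)) :=
  {x | ∃ n : ℕ, max N 1 ≤ n ∧ (∀ i ∈ Finset.Icc 1 n, dist (double^[i] x) x ≠ 0) ∧
      ∑ i ∈ Finset.Icc 1 n, Real.logb 2 (dist (double^[i] x) x) < -(N : ℝ) * n}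

lemma isOpen_goodSet (N : ℕ) : IsOpen (goodSet N) := by
  rw [isOpen_iff_mem_nhds]
  rintro x ⟨n, hn, h1, h2⟩
  have hc : ∀ i : ℕ, Continuous fun y : AddCircle (1:ℝ) => dist (double^[i] y) y :=
    fun i => (continuous_double.iterate i).dist continuous_id
  have E1 : ∀ᶠ y in nhds x, ∀ i ∈ Finset.Icc 1 n, dist (double^[i] y) y ≠ 0 := by
    rw [Filter.eventually_all_finset]
    intro i hi
    exact (hc i).continuousAt (compl_singleton_mem_nhds (h1 i hi))
  have hCA : ContinuousAt (fun y : AddCircle (1:ℝ) =>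
      ∑ i ∈ Finset.Icc 1 n, Real.logb 2 (dist (double^[i] y) y)) x := by
    refine tendsto_finset_sum _ fun i hi => ?_
    exact ContinuousAt.comp (g := Real.logb 2)
      (f := fun y : AddCircle (1:ℝ) => dist (double^[i] y) y)
      (Real.continuousAt_logb (h1 i hi)) ((hc i).continuousAt)
  have E2 : ∀ᶠ y in nhds x,
      (∑ i ∈ Finset.Icc 1 n, Real.logb 2 (dist (double^[i] y) y)) < -(N : ℝ) * n :=
    hCA (Iio_mem_nhds h2)
  filter_upwards [E1, E2] with y hy1 hy2
  exact ⟨n, hn, hy1, hy2⟩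

lemma dense_goodSet (N : ℕ) : Dense (goodSet N) := by
  rw [Metric.dense_iff]
  intro x ε hε
  obtain ⟨x₀, rfl⟩ := QuotientAddGroup.mk_surjective x
  -- choose n
  obtain ⟨n₀, hn₀⟩ := exists_pow_lt_of_lt_one (by linarith : (0:ℝ) < ε/4)
    (by norm_num : (1/2:ℝ) < 1)
  set n := max n₀ (max N 1) with hndef
  have hn1 : 1 ≤ n := le_trans (le_max_right N 1) (le_max_right _ _)
  have hNn : max N 1 ≤ n := le_max_right _ _
  have hε4 : ((1:ℝ)/2)^n < ε/4 :=
    lt_of_le_of_lt (pow_le_pow_of_le_one (by norm_num) (by norm_num) (le_max_left _ _)) hn₀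
  have h2le : (2:ℝ) ≤ 2^n := by
    calc (2:ℝ) = 2^1 := by norm_num
    _ ≤ 2^n := pow_le_pow_right₀ (by norm_num) hn1
  set D : ℝ := 2^n - 1 with hDdef
  have hD : 0 < D := by simp only [hDdef]; linarith
  have hD2 : (2:ℝ)^n / 2 ≤ D := by simp only [hDdef]; linarith
  set a : ℤ := round (D * x₀) with hadef
  -- choose m and δ
  obtain ⟨m₀, hm₀⟩ := exists_pow_lt_of_lt_one (by linarith : (0:ℝ) < ε/4)
    (by norm_num : (1/2:ℝ) < 1)
  set m := max m₀ (n + N*n + 2) with hmdef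
  set δ : ℝ := Real.sqrt 2 * (1/2)^(m+1) with hδdef
  have hsqrt2 : Real.sqrt 2 < 2 := by
    nlinarith [Real.sq_sqrt (by norm_num : (0:ℝ) ≤ 2), Real.sqrt_nonneg 2]
  have hδpos : 0 < δ := by
    apply mul_pos (Real.sqrt_pos.mpr (by norm_num)) (by positivity)
  have hδm : δ < (1/2:ℝ)^m := by
    have : (2:ℝ) * (1/2)^(m+1) = (1/2)^m := by rw [pow_succ]; ring
    calc δ < 2 * (1/2:ℝ)^(m+1) := by
          exact mul_lt_mul_of_pos_right hsqrt2 (by positivity)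
      _ = (1/2:ℝ)^m := this
  have hδε : δ < ε/4 := by
    have h1 : ((1:ℝ)/2)^m ≤ (1/2)^m₀ :=
      pow_le_pow_of_le_one (by norm_num) (by norm_num) (le_max_left _ _)
    linarith
  have hDδ : D * δ ≤ (1/2:ℝ)^(N*n+2) := by
    have h1 : ((1:ℝ)/2)^m ≤ (1/2)^(n + N*n + 2) :=
      pow_le_pow_of_le_one (by norm_num) (by norm_num) (le_max_right _ _)
    have h2 : D * δ ≤ 2^n * (1/2:ℝ)^m := by
      have : D ≤ 2^n := by simp only [hDdef]; linarith
      calc D * δ ≤ 2^n * δ := mul_le_mul_of_nonneg_right this hδpos.le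
        _ ≤ 2^n * (1/2:ℝ)^m := mul_le_mul_of_nonneg_left hδm.le (by positivity)
    have h3 : (2:ℝ)^n * (1/2)^(n + N*n + 2) = (1/2)^(N*n+2) := by
      rw [pow_add, one_div, inv_pow]
      field_simp
      rw [show (2:ℝ)^(n+N*n) = 2^n * 2^(N*n) from pow_add _ _ _,
        show ((1:ℝ)/2)^(N*n+2) = ((2:ℝ)^(N*n) * 2^2)⁻¹ by rw [one_div, inv_pow, pow_add]]
      field_simp
    calc D * δ ≤ 2^n * (1/2:ℝ)^m := h2
      _ ≤ 2^n * (1/2:ℝ)^(n + N*n + 2) :=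
          mul_le_mul_of_nonneg_left h1 (by positivity)
      _ = (1/2:ℝ)^(N*n+2) := h3
  -- the point
  set q : ℚ := (a : ℚ) / (2^n - 1) with hqdef
  have hq2n : ((2:ℚ)^n - 1) ≠ 0 := by
    have : (2:ℚ) ≤ 2^n := by
      calc (2:ℚ) = 2^1 := by norm_num
      _ ≤ 2^n := pow_le_pow_right₀ (by norm_num) hn1
    intro h; rw [sub_eq_zero] at h; rw [h] at this; norm_num at this
  have hqcast : (q : ℝ) = (a : ℝ) / D := by
    rw [hqdef]; push_cast; simp [hDdef]
  set y₀ : ℝ := (q : ℝ) + δ with hy₀def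
  -- irrationality
  have hδirr : Irrational δ := by
    have : δ = ((((1:ℚ)/2)^(m+1) : ℚ) : ℝ) * Real.sqrt 2 := by
      rw [hδdef]; push_cast; ring
    rw [this]
    exact irrational_sqrt_two.ratCast_mul (by positivity)
  have hy₀irr : Irrational y₀ := hδirr.ratCast_add (q := q)
  have hirr : ∀ i : ℕ, 1 ≤ i → Irrational (((2:ℝ)^i - 1) * y₀) := by
    intro i hi
    have hne : ((2:ℚ)^i - 1) ≠ 0 := by
      have : (2:ℚ) ≤ 2^i := by
        calc (2:ℚ) = 2^1 := by norm_num
        _ ≤ 2^i := pow_le_pow_right₀ (by norm_num) hi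
      intro h; rw [sub_eq_zero] at h; rw [h] at this; norm_num at this
    have := hy₀irr.ratCast_mul hne
    have hcast : (((2:ℚ)^i - 1 : ℚ) : ℝ) = (2:ℝ)^i - 1 := by push_cast; ring
    rwa [hcast] at this
  -- distance identity
  have hdiff : ∀ i : ℕ, dist (double^[i] ((y₀:ℝ) : AddCircle (1:ℝ))) ((y₀:ℝ) : AddCircle (1:ℝ))
      = ‖((((2:ℝ)^i - 1) * y₀ : ℝ) : AddCircle (1:ℝ))‖ := by
    intro i
    rw [double_iter, dist_coe]
    congr 1
    ring
  have hne0 : ∀ i ∈ Finset.Icc 1 n,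
      dist (double^[i] ((y₀:ℝ) : AddCircle (1:ℝ))) ((y₀:ℝ) : AddCircle (1:ℝ)) ≠ 0 := by
    intro i hi
    rw [hdiff i]
    rw [Finset.mem_Icc] at hi
    intro h
    rw [norm_eq_zero, AddCircle.coe_eq_zero_iff] at h
    obtain ⟨k, hk⟩ := h
    exact (hirr i hi.1).ne_int k (by rw [← hk]; simp)
  -- bound at i = n
  have hdn : dist (double^[n] ((y₀:ℝ) : AddCircle (1:ℝ))) ((y₀:ℝ) : AddCircle (1:ℝ))
      ≤ (1/2:ℝ)^(N*n+2) := by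
    rw [hdiff n]
    have key : ((((2:ℝ)^n - 1) * y₀ : ℝ) : AddCircle (1:ℝ)) = ((D * δ : ℝ) : AddCircle (1:ℝ)) := by
      have harith : ((2:ℝ)^n - 1) * y₀ = (a : ℝ) + D * δ := by
        rw [hy₀def, hqcast]
        field_simp
        ring
      rw [harith, AddCircle.coe_add, int_coe_zero, zero_add]
    rw [key]
    calc ‖((D * δ : ℝ) : AddCircle (1:ℝ))‖ ≤ |D * δ| := norm_coe_le _
      _ = D * δ := abs_of_pos (mul_pos hD hδpos)
      _ ≤ (1/2:ℝ)^(N*n+2) := hDδ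
  -- all distances ≤ 1/2
  have hhalf : ∀ i : ℕ,
      dist (double^[i] ((y₀:ℝ) : AddCircle (1:ℝ))) ((y₀:ℝ) : AddCircle (1:ℝ)) ≤ 1/2 := by
    intro i
    rw [dist_eq_norm]
    have := AddCircle.norm_le_half_period (p := (1:ℝ))
      (x := double^[i] ((y₀:ℝ) : AddCircle (1:ℝ)) - ((y₀:ℝ) : AddCircle (1:ℝ))) (by norm_num)
    simpa using this
  -- sum bound
  have hsum : ∑ i ∈ Finset.Icc 1 n,
      Real.logb 2 (dist (double^[i] ((y₀:ℝ) : AddCircle (1:ℝ))) ((y₀:ℝ) : AddCircle (1:ℝ)))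
      < -(N:ℝ) * n := by
    have hterm : ∀ i ∈ Finset.Icc 1 n,
        Real.logb 2 (dist (double^[i] ((y₀:ℝ) : AddCircle (1:ℝ))) ((y₀:ℝ) : AddCircle (1:ℝ)))
        ≤ if i = n then -((N:ℝ)*n+2) else 0 := by
      intro i hi
      by_cases hin : i = n
      · rw [hin, if_pos rfl]
        have hmem : n ∈ Finset.Icc 1 n := Finset.mem_Icc.mpr ⟨hn1, le_rfl⟩
        have hpos : 0 < dist (double^[n] ((y₀:ℝ) : AddCircle (1:ℝ))) ((y₀:ℝ) : AddCircle (1:ℝ)) :=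
          lt_of_le_of_ne dist_nonneg (Ne.symm (hne0 n hmem))
        have h1 : Real.logb 2 (dist (double^[n] ((y₀:ℝ) : AddCircle (1:ℝ))) ((y₀:ℝ) : AddCircle (1:ℝ)))
            ≤ Real.logb 2 ((1/2:ℝ)^(N*n+2)) :=
          Real.logb_le_logb_of_le (by norm_num) hpos hdn
        have h2 : Real.logb 2 ((1/2:ℝ)^(N*n+2)) = -((N:ℝ)*n+2) := by
          rw [Real.logb, Real.log_pow, one_div, Real.log_inv]
          rw [div_eq_iff (Real.log_pos (by norm_num : (1:ℝ) < 2)).ne']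
          push_cast
          ring
        linarith
      · simp only [if_neg hin]
        apply Real.logb_nonpos (by norm_num) dist_nonneg
        linarith [hhalf i]
    calc ∑ i ∈ Finset.Icc 1 n,
        Real.logb 2 (dist (double^[i] ((y₀:ℝ) : AddCircle (1:ℝ))) ((y₀:ℝ) : AddCircle (1:ℝ)))
        ≤ ∑ i ∈ Finset.Icc 1 n, (if i = n then -((N:ℝ)*n+2) else 0) := Finset.sum_le_sum hterm
      _ = -((N:ℝ)*n+2) := by
          rw [Finset.sum_ite_eq' (Finset.Icc 1 n) n (fun _ => -((N:ℝ)*n+2))]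
          simp [hn1]
      _ < -(N:ℝ) * n := by linarith
  -- ball membership
  have hball : ((y₀:ℝ) : AddCircle (1:ℝ)) ∈ Metric.ball (((x₀:ℝ) : AddCircle (1:ℝ))) ε := by
    rw [Metric.mem_ball, dist_coe]
    have h1 : |(q:ℝ) - x₀| ≤ (1/2:ℝ)^n := by
      rw [hqcast]
      have habs : |D * x₀ - (a:ℝ)| ≤ 1/2 := by
        rw [hadef]; exact abs_sub_round (D * x₀)
      have key : (a:ℝ)/D - x₀ = -((D * x₀ - a)/D) := by field_simp; ring
      rw [key, abs_neg, abs_div, abs_of_pos hD, div_le_iff₀ hD]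
      have heq : ((1:ℝ)/2)^n * (2^n/2) = 1/2 := by
        rw [one_div, inv_pow]
        field_simp
      calc |D * x₀ - (a:ℝ)| ≤ 1/2 := habs
        _ = (1/2:ℝ)^n * (2^n/2) := heq.symm
        _ ≤ (1/2:ℝ)^n * D := mul_le_mul_of_nonneg_left hD2 (by positivity)
    calc ‖((y₀ - x₀ : ℝ) : AddCircle (1:ℝ))‖ ≤ |y₀ - x₀| := norm_coe_le _
      _ ≤ |(q:ℝ) - x₀| + δ := by
          rw [hy₀def]
          calc |(q:ℝ) + δ - x₀| ≤ |(q:ℝ) - x₀| + |δ| := by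
                have : (q:ℝ) + δ - x₀ = ((q:ℝ) - x₀) + δ := by ring
                rw [this]; exact abs_add_le _ _
            _ = |(q:ℝ) - x₀| + δ := by rw [abs_of_pos hδpos]
      _ < ε := by linarith
  exact ⟨_, hball, n, hNn, hne0, hsum⟩

theorem stmt18 :
    {x : AddCircle (1:ℝ) |
        Filter.liminf
          (fun n : ℕ => (((1 / n : ℝ) *
              ∑ i ∈ Finset.Icc 1 n, Real.logb 2 (dist (double^[i] x) x) : ℝ) : EReal))
          Filter.atTop = ⊥} ∈ residual (AddCircle (1:ℝ)) := by
  have hsub : (⋂ N, goodSet N) ⊆ {x : AddCircle (1:ℝ) |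
      Filter.liminf
        (fun n : ℕ => (((1 / n : ℝ) *
            ∑ i ∈ Finset.Icc 1 n, Real.logb 2 (dist (double^[i] x) x) : ℝ) : EReal))
        Filter.atTop = ⊥} := by
    intro x hx
    simp only [Set.mem_iInter] at hx
    simp only [Set.mem_setOf_eq]
    rw [EReal.eq_bot_iff_forall_lt]
    intro C
    have hle : Filter.liminf
        (fun n : ℕ => (((1 / n : ℝ) *
            ∑ i ∈ Finset.Icc 1 n, Real.logb 2 (dist (double^[i] x) x) : ℝ) : EReal))
        Filter.atTop ≤ ((C - 1 : ℝ) : EReal) := by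
      apply Filter.liminf_le_of_frequently_le'
      rw [Filter.frequently_atTop]
      intro M
      set N : ℕ := max M ⌈1 - C⌉₊ with hNdef
      obtain ⟨n, hn, _, hsum⟩ := hx N
      refine ⟨n, le_trans (le_trans (le_max_left M _) (le_max_left N 1)) hn, ?_⟩
      have hn0 : (0:ℝ) < n := by
        have : 1 ≤ n := le_trans (le_max_right N 1) hn
        exact_mod_cast this
      have h1 : (1/(n:ℝ)) * ∑ i ∈ Finset.Icc 1 n, Real.logb 2 (dist (double^[i] x) x)
          < (1/(n:ℝ)) * (-(N:ℝ) * n) :=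
        mul_lt_mul_of_pos_left hsum (by positivity)
      have h2 : (1/(n:ℝ)) * (-(N:ℝ) * n) = -(N:ℝ) := by field_simp
      have h3 : -(N:ℝ) ≤ C - 1 := by
        have ha : (1 - C) ≤ (⌈1 - C⌉₊ : ℝ) := Nat.le_ceil _
        have hb : ((⌈1 - C⌉₊ : ℕ) : ℝ) ≤ (N : ℝ) := by
          exact_mod_cast Nat.cast_le.mpr (le_max_right M ⌈1 - C⌉₊)
        linarith
      show (((1 / n : ℝ) *
          ∑ i ∈ Finset.Icc 1 n, Real.logb 2 (dist (double^[i] x) x) : ℝ) : EReal)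
          ≤ ((C - 1 : ℝ) : EReal)
      rw [EReal.coe_le_coe_iff]
      linarith
    exact lt_of_le_of_lt hle (by rw [EReal.coe_lt_coe_iff]; linarith)
  exact Filter.mem_of_superset
    (countable_iInter_mem.mpr fun N => residual_of_dense_open (isOpen_goodSet N) (dense_goodSet N))
    hsub
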